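/- For all x in (0, π/2), (1 - cosh(x)/cosh(x/2))/x² > -3/8 and (1 - cosh(x)/cosh(x/2))/x² < (4/π²)(1 - cosh(π/2)/cosh(π/4)). -/

import Mathlib

open Real

private lemma nonneg_of_deriv {f f' : ℝ → ℝ} (hf : ∀ t, HasDerivAt f (f' t) t)
    (h0 : f 0 = 0) {B : ℝ}
    (h' : ∀ t, 0 ≤ t → t ≤ B → 0 ≤ f' t) :
    ∀ t, 0 ≤ t → t ≤ B → 0 ≤ f t := by
  intro t ht0 htB
  have hmono : MonotoneOn f (Set.Icc 0 B) :=
    monotoneOn_of_deriv_nonneg (convex_Icc _ _)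
      (fun y _ => (hf y).continuousAt.continuousWithinAt)
      (fun y hy => (hf y).differentiableAt.differentiableWithinAt)
      (fun y hy => by
        rw [(hf y).deriv]
        have hy' : y ∈ Set.Icc (0:ℝ) B := interior_subset hy
        exact h' y hy'.1 hy'.2)
  have h0mem : (0:ℝ) ∈ Set.Icc (0:ℝ) B := ⟨le_refl _, le_trans ht0 htB⟩
  have := hmono h0mem ⟨ht0, htB⟩ ht0
  rw [h0] at this
  exact this

private lemma cosh_le_two : ∀ t : ℝ, 0 ≤ t → t ≤ 0.79 → cosh t ≤ 2 := by
  intro t ht0 htB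
  rw [Real.cosh_eq]
  have h1 : exp t ≤ exp 1 := exp_le_exp.mpr (by linarith)
  have h2 : exp 1 < 2.7182818286 := exp_one_lt_d9
  have h3 : exp (-t) ≤ exp 0 := exp_le_exp.mpr (by linarith)
  rw [Real.exp_zero] at h3
  linarith

private lemma sinh_ub1 : ∀ t : ℝ, 0 ≤ t → t ≤ 0.79 → sinh t ≤ 2 * t := by
  have key : ∀ t, 0 ≤ t → t ≤ (0.79:ℝ) → 0 ≤ 2 * t - sinh t := by
    apply nonneg_of_deriv (f' := fun t => 2 - cosh t)
    · intro t
      simpa using ((hasDerivAt_id t).const_mul 2).fun_sub (Real.hasDerivAt_sinh t)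
    · simp
    · intro t ht0 htB
      have := cosh_le_two t ht0 htB
      linarith
  intro t ht0 htB; linarith [key t ht0 htB]

private lemma cosh_ub1 : ∀ t : ℝ, 0 ≤ t → t ≤ 0.79 → cosh t ≤ 1 + t ^ 2 := by
  have key : ∀ t, 0 ≤ t → t ≤ (0.79:ℝ) → 0 ≤ 1 + t ^ 2 - cosh t := by
    apply nonneg_of_deriv (f' := fun t => 2 * t - sinh t)
    · intro t
      have h := ((hasDerivAt_pow 2 t).const_add 1).fun_sub (Real.hasDerivAt_cosh t)
      refine h.congr_deriv ?_
      push_cast; ring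
    · simp
    · intro t ht0 htB
      linarith [sinh_ub1 t ht0 htB]
  intro t ht0 htB; linarith [key t ht0 htB]

private lemma sinh_ub2 : ∀ t : ℝ, 0 ≤ t → t ≤ 0.79 → sinh t ≤ t + t ^ 3 / 3 := by
  have key : ∀ t, 0 ≤ t → t ≤ (0.79:ℝ) → 0 ≤ t + t ^ 3 / 3 - sinh t := by
    apply nonneg_of_deriv (f' := fun t => 1 + t ^ 2 - cosh t)
    · intro t
      have h := ((hasDerivAt_id t).fun_add ((hasDerivAt_pow 3 t).div_const 3)).fun_sub
        (Real.hasDerivAt_sinh t)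
      refine h.congr_deriv ?_
      push_cast; ring
    · simp
    · intro t ht0 htB
      linarith [cosh_ub1 t ht0 htB]
  intro t ht0 htB; linarith [key t ht0 htB]

private lemma cosh_ub2 : ∀ t : ℝ, 0 ≤ t → t ≤ 0.79 → cosh t ≤ 1 + t ^ 2 / 2 + t ^ 4 / 12 := by
  have key : ∀ t, 0 ≤ t → t ≤ (0.79:ℝ) → 0 ≤ 1 + t ^ 2 / 2 + t ^ 4 / 12 - cosh t := by
    apply nonneg_of_deriv (f' := fun t => t + t ^ 3 / 3 - sinh t)
    · intro t
      have h := (((hasDerivAt_pow 2 t).div_const 2).const_add 1).fun_add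
        ((hasDerivAt_pow 4 t).div_const 12) |>.fun_sub (Real.hasDerivAt_cosh t)
      refine h.congr_deriv ?_
      push_cast; ring
    · simp
    · intro t ht0 htB
      linarith [sinh_ub2 t ht0 htB]
  intro t ht0 htB; linarith [key t ht0 htB]

private lemma sinh_ub3 : ∀ t : ℝ, 0 ≤ t → t ≤ 0.79 →
    sinh t ≤ t + t ^ 3 / 6 + t ^ 5 / 60 := by
  have key : ∀ t, 0 ≤ t → t ≤ (0.79:ℝ) → 0 ≤ t + t ^ 3 / 6 + t ^ 5 / 60 - sinh t := by
    apply nonneg_of_deriv (f' := fun t => 1 + t ^ 2 / 2 + t ^ 4 / 12 - cosh t)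
    · intro t
      have h := ((hasDerivAt_id t).fun_add ((hasDerivAt_pow 3 t).div_const 6)).fun_add
        ((hasDerivAt_pow 5 t).div_const 60) |>.fun_sub (Real.hasDerivAt_sinh t)
      refine h.congr_deriv ?_
      push_cast; ring
    · simp
    · intro t ht0 htB
      linarith [cosh_ub2 t ht0 htB]
  intro t ht0 htB; linarith [key t ht0 htB]

private lemma cosh_ub3 : ∀ t : ℝ, 0 ≤ t → t ≤ 0.79 →
    cosh t ≤ 1 + t ^ 2 / 2 + t ^ 4 / 24 + t ^ 6 / 360 := by
  have key : ∀ t, 0 ≤ t → t ≤ (0.79:ℝ) →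
      0 ≤ 1 + t ^ 2 / 2 + t ^ 4 / 24 + t ^ 6 / 360 - cosh t := by
    apply nonneg_of_deriv (f' := fun t => t + t ^ 3 / 6 + t ^ 5 / 60 - cosh t * 0 - sinh t + 0)
    · intro t
      have h := ((((hasDerivAt_pow 2 t).div_const 2).const_add 1).fun_add
        ((hasDerivAt_pow 4 t).div_const 24)).fun_add
        ((hasDerivAt_pow 6 t).div_const 360) |>.fun_sub (Real.hasDerivAt_cosh t)
      refine h.congr_deriv ?_
      push_cast; ring
    · simp
    · intro t ht0 htB
      have := sinh_ub3 t ht0 htB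
      simp only [mul_zero, add_zero]
      linarith
  intro t ht0 htB; linarith [key t ht0 htB]

private lemma sinh_ub4 : ∀ t : ℝ, 0 ≤ t → t ≤ 0.79 →
    sinh t ≤ t + t ^ 3 / 6 + t ^ 5 / 120 + t ^ 7 / 2520 := by
  have key : ∀ t, 0 ≤ t → t ≤ (0.79:ℝ) →
      0 ≤ t + t ^ 3 / 6 + t ^ 5 / 120 + t ^ 7 / 2520 - sinh t := by
    apply nonneg_of_deriv
      (f' := fun t => 1 + t ^ 2 / 2 + t ^ 4 / 24 + t ^ 6 / 360 - cosh t)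
    · intro t
      have h := (((hasDerivAt_id t).fun_add ((hasDerivAt_pow 3 t).div_const 6)).fun_add
        ((hasDerivAt_pow 5 t).div_const 120)).fun_add
        ((hasDerivAt_pow 7 t).div_const 2520) |>.fun_sub (Real.hasDerivAt_sinh t)
      refine h.congr_deriv ?_
      push_cast; ring
    · simp
    · intro t ht0 htB
      linarith [cosh_ub3 t ht0 htB]
  intro t ht0 htB; linarith [key t ht0 htB]

private lemma cosh_ub4 : ∀ t : ℝ, 0 ≤ t → t ≤ 0.79 →
    cosh t ≤ 1 + t ^ 2 / 2 + t ^ 4 / 24 + t ^ 6 / 720 + t ^ 8 / 20160 := by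
  have key : ∀ t, 0 ≤ t → t ≤ (0.79:ℝ) →
      0 ≤ 1 + t ^ 2 / 2 + t ^ 4 / 24 + t ^ 6 / 720 + t ^ 8 / 20160 - cosh t := by
    apply nonneg_of_deriv
      (f' := fun t => t + t ^ 3 / 6 + t ^ 5 / 120 + t ^ 7 / 2520 - sinh t)
    · intro t
      have h := (((((hasDerivAt_pow 2 t).div_const 2).const_add 1).fun_add
        ((hasDerivAt_pow 4 t).div_const 24)).fun_add
        ((hasDerivAt_pow 6 t).div_const 720)).fun_add
        ((hasDerivAt_pow 8 t).div_const 20160) |>.fun_sub (Real.hasDerivAt_cosh t)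
      refine h.congr_deriv ?_
      push_cast; ring
    · simp
    · intro t ht0 htB
      linarith [sinh_ub4 t ht0 htB]
  intro t ht0 htB; linarith [key t ht0 htB]

private lemma sinh_lb : ∀ t : ℝ, 0 ≤ t → t ≤ 0.79 → t ≤ sinh t := by
  have key : ∀ t, 0 ≤ t → t ≤ (0.79:ℝ) → 0 ≤ sinh t - t := by
    apply nonneg_of_deriv (f' := fun t => cosh t - 1)
    · intro t
      simpa using (Real.hasDerivAt_sinh t).fun_sub (hasDerivAt_id t)
    · simp
    · intro t _ _
      linarith [Real.one_le_cosh t]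
  intro t ht0 htB; linarith [key t ht0 htB]

private lemma cosh_lb1 : ∀ t : ℝ, 0 ≤ t → t ≤ 0.79 → 1 + t ^ 2 / 2 ≤ cosh t := by
  have key : ∀ t, 0 ≤ t → t ≤ (0.79:ℝ) → 0 ≤ cosh t - (1 + t ^ 2 / 2) := by
    apply nonneg_of_deriv (f' := fun t => sinh t - t)
    · intro t
      have h := (Real.hasDerivAt_cosh t).fun_sub (((hasDerivAt_pow 2 t).div_const 2).const_add 1)
      refine h.congr_deriv ?_
      push_cast; ring
    · simp
    · intro t ht0 htB
      linarith [sinh_lb t ht0 htB]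
  intro t ht0 htB; linarith [key t ht0 htB]

private lemma sinh_lb2 : ∀ t : ℝ, 0 ≤ t → t ≤ 0.79 → t + t ^ 3 / 6 ≤ sinh t := by
  have key : ∀ t, 0 ≤ t → t ≤ (0.79:ℝ) → 0 ≤ sinh t - (t + t ^ 3 / 6) := by
    apply nonneg_of_deriv (f' := fun t => cosh t - (1 + t ^ 2 / 2))
    · intro t
      have h := (Real.hasDerivAt_sinh t).fun_sub
        ((hasDerivAt_id t).fun_add ((hasDerivAt_pow 3 t).div_const 6))
      refine h.congr_deriv ?_
      push_cast; ring
    · simp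
    · intro t ht0 htB
      linarith [cosh_lb1 t ht0 htB]
  intro t ht0 htB; linarith [key t ht0 htB]

private lemma cosh_lb : ∀ t : ℝ, 0 ≤ t → t ≤ 0.79 →
    1 + t ^ 2 / 2 + t ^ 4 / 24 ≤ cosh t := by
  have key : ∀ t, 0 ≤ t → t ≤ (0.79:ℝ) → 0 ≤ cosh t - (1 + t ^ 2 / 2 + t ^ 4 / 24) := by
    apply nonneg_of_deriv (f' := fun t => sinh t - (t + t ^ 3 / 6))
    · intro t
      have h := (Real.hasDerivAt_cosh t).fun_sub
        ((((hasDerivAt_pow 2 t).div_const 2).const_add 1).fun_add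
          ((hasDerivAt_pow 4 t).div_const 24))
      refine h.congr_deriv ?_
      push_cast; ring
    · simp
    · intro t ht0 htB
      linarith [sinh_lb2 t ht0 htB]
  intro t ht0 htB; linarith [key t ht0 htB]

/-- Simplified upper bound for cosh on [0, 0.79]. -/
private lemma cosh_ub : ∀ t : ℝ, 0 ≤ t → t ≤ 0.79 →
    cosh t ≤ 1 + t ^ 2 / 2 + t ^ 4 / 24 + t ^ 6 / 500 := by
  intro t ht0 htB
  have h := cosh_ub4 t ht0 htB
  have ht2 : t ^ 2 ≤ 0.6241 := by nlinarith
  have h6 : 0 ≤ t ^ 6 := pow_nonneg ht0 6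
  have h8 : t ^ 8 ≤ 0.6241 * t ^ 6 := by
    calc t ^ 8 = t ^ 2 * t ^ 6 := by ring
    _ ≤ 0.6241 * t ^ 6 := by exact mul_le_mul_of_nonneg_right ht2 h6
  nlinarith

/-- Simplified upper bound for sinh on [0, 0.79]. -/
private lemma sinh_ub : ∀ t : ℝ, 0 ≤ t → t ≤ 0.79 →
    sinh t ≤ t + t ^ 3 / 6 + t ^ 5 / 100 := by
  intro t ht0 htB
  have h := sinh_ub4 t ht0 htB
  have ht2 : t ^ 2 ≤ 0.6241 := by nlinarith
  have h5 : 0 ≤ t ^ 5 := pow_nonneg ht0 5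
  have h7 : t ^ 7 ≤ 0.6241 * t ^ 5 := by
    calc t ^ 7 = t ^ 2 * t ^ 5 := by ring
    _ ≤ 0.6241 * t ^ 5 := by exact mul_le_mul_of_nonneg_right ht2 h5
  nlinarith

private lemma upow (u : ℝ) (hu0 : 0 < u) (hu1 : u ≤ 1) :
    u ^ 3 ≤ u ^ 2 ∧ u ^ 4 ≤ u ^ 2 ∧ u ^ 5 ≤ u ^ 2 ∧ u ^ 6 ≤ u ^ 2 ∧
      u ^ 7 ≤ u ^ 2 ∧ u ^ 8 ≤ u ^ 2 ∧ u ^ 9 ≤ u ^ 2 := by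
  refine ⟨?_, ?_, ?_, ?_, ?_, ?_, ?_⟩ <;>
    exact pow_le_pow_of_le_one hu0.le hu1 (by norm_num)

private lemma polyA (u : ℝ) (hu0 : 0 < u) (hu1 : u ≤ 0.6241) :
    2 * (1 + u / 2 + u ^ 2 / 24 + u ^ 3 / 500) ^ 2 - 1
      < (1 + 3 / 2 * u) * (1 + u / 2 + u ^ 2 / 24) := by
  obtain ⟨e3, e4, e5, e6, e7, e8, e9⟩ := upow u hu0 (by linarith)
  nlinarith [pow_pos hu0 2, e3, e4, e5, e6]

private lemma polyD (u : ℝ) (hu0 : 0 < u) (hu1 : u ≤ 0.6241) :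
    (u + u ^ 2 / 6 + u ^ 3 / 100) * (2 * (1 + u / 2 + u ^ 2 / 24 + u ^ 3 / 500) ^ 2 + 1)
      < 2 * (1 + u / 2 + u ^ 2 / 24) * (2 * (1 + u / 2 + u ^ 2 / 24) + 1)
        * ((1 + u / 2 + u ^ 2 / 24) - 1) := by
  obtain ⟨e3, e4, e5, e6, e7, e8, e9⟩ := upow u hu0 (by linarith)
  nlinarith [pow_pos hu0 2, e3, e4, e5, e6, e7, e8, e9]

/-- Core inequality for the lower bound: cosh(2t) < (1 + (3/2)t²) cosh t. -/
private lemma keyA (t : ℝ) (ht0 : 0 < t) (htB : t ≤ 0.79) :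
    2 * cosh t ^ 2 - 1 < (1 + 3 / 2 * t ^ 2) * cosh t := by
  have hcl := cosh_lb t ht0.le htB
  have hcu := cosh_ub t ht0.le htB
  have hc0 : (0:ℝ) < cosh t := Real.cosh_pos t
  have hu0 : 0 < t ^ 2 := by positivity
  have hu1 : t ^ 2 ≤ (0.6241:ℝ) := by nlinarith
  have hpoly := polyA (t ^ 2) hu0 hu1
  have hsq : cosh t ^ 2 ≤ (1 + t ^ 2 / 2 + t ^ 4 / 24 + t ^ 6 / 500) ^ 2 := by
    nlinarith [hc0, hcu]
  have hrhs : (1 + 3 / 2 * t ^ 2) * (1 + t ^ 2 / 2 + t ^ 4 / 24)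
      ≤ (1 + 3 / 2 * t ^ 2) * cosh t := by
    have h1 : (0:ℝ) ≤ 1 + 3 / 2 * t ^ 2 := by positivity
    exact mul_le_mul_of_nonneg_left hcl h1
  nlinarith [hpoly, hsq, hrhs]

/-- Core inequality for the upper bound (derivative positivity). -/
private lemma keyD (t : ℝ) (ht0 : 0 < t) (htB : t ≤ 0.79) :
    t * sinh t * (2 * cosh t ^ 2 + 1) < 2 * cosh t * (2 * cosh t + 1) * (cosh t - 1) := by
  have hcl := cosh_lb t ht0.le htB
  have hcu := cosh_ub t ht0.le htB
  have hsu := sinh_ub t ht0.le htB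
  have hc0 : (0:ℝ) < cosh t := Real.cosh_pos t
  have hs0 : 0 ≤ sinh t := Real.sinh_nonneg_iff.mpr ht0.le
  have hc1 : (1:ℝ) ≤ cosh t := Real.one_le_cosh t
  have hcu0 : (0:ℝ) < 1 + t ^ 2 / 2 + t ^ 4 / 24 + t ^ 6 / 500 := by positivity
  have hsu0 : (0:ℝ) ≤ t + t ^ 3 / 6 + t ^ 5 / 100 := by positivity
  have hcl1 : (1:ℝ) ≤ 1 + t ^ 2 / 2 + t ^ 4 / 24 := by nlinarith [sq_nonneg t, sq_nonneg (t ^ 2)]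
  -- left side bounded above
  have hL : t * sinh t * (2 * cosh t ^ 2 + 1)
      ≤ t * (t + t ^ 3 / 6 + t ^ 5 / 100)
        * (2 * (1 + t ^ 2 / 2 + t ^ 4 / 24 + t ^ 6 / 500) ^ 2 + 1) := by
    have h2 : cosh t ^ 2 ≤ (1 + t ^ 2 / 2 + t ^ 4 / 24 + t ^ 6 / 500) ^ 2 := by
      nlinarith [hc0, hcu]
    have h2' : 2 * cosh t ^ 2 + 1 ≤ 2 * (1 + t ^ 2 / 2 + t ^ 4 / 24 + t ^ 6 / 500) ^ 2 + 1 := by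
      linarith
    have h3 : sinh t * (2 * cosh t ^ 2 + 1) ≤ (t + t ^ 3 / 6 + t ^ 5 / 100)
        * (2 * (1 + t ^ 2 / 2 + t ^ 4 / 24 + t ^ 6 / 500) ^ 2 + 1) :=
      mul_le_mul hsu h2' (by positivity) hsu0
    have h4 := mul_le_mul_of_nonneg_left h3 ht0.le
    calc t * sinh t * (2 * cosh t ^ 2 + 1) = t * (sinh t * (2 * cosh t ^ 2 + 1)) := by ring
    _ ≤ t * ((t + t ^ 3 / 6 + t ^ 5 / 100)
        * (2 * (1 + t ^ 2 / 2 + t ^ 4 / 24 + t ^ 6 / 500) ^ 2 + 1)) := h4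
    _ = t * (t + t ^ 3 / 6 + t ^ 5 / 100)
        * (2 * (1 + t ^ 2 / 2 + t ^ 4 / 24 + t ^ 6 / 500) ^ 2 + 1) := by ring
  -- right side bounded below
  have hR : 2 * (1 + t ^ 2 / 2 + t ^ 4 / 24) * (2 * (1 + t ^ 2 / 2 + t ^ 4 / 24) + 1)
        * ((1 + t ^ 2 / 2 + t ^ 4 / 24) - 1)
      ≤ 2 * cosh t * (2 * cosh t + 1) * (cosh t - 1) := by
    have h1 : 0 ≤ cosh t - (1 + t ^ 2 / 2 + t ^ 4 / 24) := by linarith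
    have hfac : 2 * cosh t * (2 * cosh t + 1) * (cosh t - 1)
        - 2 * (1 + t ^ 2 / 2 + t ^ 4 / 24) * (2 * (1 + t ^ 2 / 2 + t ^ 4 / 24) + 1)
          * ((1 + t ^ 2 / 2 + t ^ 4 / 24) - 1)
        = (cosh t - (1 + t ^ 2 / 2 + t ^ 4 / 24))
          * (4 * cosh t ^ 2 + 4 * cosh t * (1 + t ^ 2 / 2 + t ^ 4 / 24)
            + 4 * (1 + t ^ 2 / 2 + t ^ 4 / 24) ^ 2
            - 2 * cosh t - 2 * (1 + t ^ 2 / 2 + t ^ 4 / 24) - 2) := by ring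
    have h2 : 0 ≤ 4 * cosh t ^ 2 + 4 * cosh t * (1 + t ^ 2 / 2 + t ^ 4 / 24)
        + 4 * (1 + t ^ 2 / 2 + t ^ 4 / 24) ^ 2
        - 2 * cosh t - 2 * (1 + t ^ 2 / 2 + t ^ 4 / 24) - 2 := by
      nlinarith [hc1, hcl1]
    nlinarith [mul_nonneg h1 h2, hfac]
  -- the polynomial gap
  have hu0 : 0 < t ^ 2 := by positivity
  have hu1 : t ^ 2 ≤ (0.6241:ℝ) := by nlinarith
  have hpoly := polyD (t ^ 2) hu0 hu1
  linarith [hL, hR, hpoly]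

theorem stmt_15 (x : ℝ) (hx0 : 0 < x) (hx1 : x < π / 2) :
    (1 - cosh x / cosh (x / 2)) / x ^ 2 > -(3 / 8) ∧
      (1 - cosh x / cosh (x / 2)) / x ^ 2 < 4 / π ^ 2 * (1 - cosh (π / 2) / cosh (π / 4)) := by
  have hpi : π < 3.15 := pi_lt_d2
  have hpi0 : 0 < π := pi_pos
  have hxB : x / 2 ≤ 0.79 := by linarith
  have ht0 : 0 < x / 2 := by linarith
  have hc0 : (0:ℝ) < cosh (x / 2) := Real.cosh_pos _
  have hcx : cosh x = 2 * cosh (x / 2) ^ 2 - 1 := by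
    have h := Real.cosh_two_mul (x / 2)
    rw [show 2 * (x / 2) = x from by ring] at h
    rw [h, Real.sinh_sq]; ring
  constructor
  · -- lower bound
    rw [gt_iff_lt, lt_div_iff₀ (by positivity : (0:ℝ) < x ^ 2)]
    have hA := keyA (x / 2) ht0 hxB
    rw [hcx]
    have h1 : (2 * cosh (x / 2) ^ 2 - 1) / cosh (x / 2)
        < 1 + 3 / 2 * (x / 2) ^ 2 := by
      rw [div_lt_iff₀ hc0]
      linarith
    have h2 : 3 / 2 * (x / 2) ^ 2 = 3 / 8 * x ^ 2 := by ring
    linarith [h1, h2.ge]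
  · -- upper bound: strict monotonicity of f on (0, π/2]
    have mono : StrictMonoOn (fun y => (1 - cosh y / cosh (y / 2)) / y ^ 2)
        (Set.Ioc 0 (π / 2)) := by
      apply strictMonoOn_of_deriv_pos (convex_Ioc _ _)
      · apply ContinuousOn.div
        · exact (continuousOn_const.sub (Real.continuous_cosh.continuousOn.div
            (Real.continuous_cosh.comp (continuous_id.div_const 2)).continuousOn
            (fun y _ => (Real.cosh_pos _).ne')))
        · exact (continuous_pow 2).continuousOn
        · intro y hy
          exact pow_ne_zero 2 (ne_of_gt hy.1)
      · intro y hy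
        rw [interior_Ioc] at hy
        obtain ⟨hy0, hy1⟩ := hy
        have hyB : y / 2 ≤ 0.79 := by linarith
        have hyt0 : 0 < y / 2 := by linarith
        have hyc0 : (0:ℝ) < cosh (y / 2) := Real.cosh_pos _
        have hycx : cosh y = 2 * cosh (y / 2) ^ 2 - 1 := by
          have h := Real.cosh_two_mul (y / 2)
          rw [show 2 * (y / 2) = y from by ring] at h
          rw [h, Real.sinh_sq]; ring
        have hysx : sinh y = 2 * sinh (y / 2) * cosh (y / 2) := by
          have h := Real.sinh_two_mul (y / 2)
          rw [show 2 * (y / 2) = y from by ring] at h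
          exact h
        have hd2 : HasDerivAt (fun z : ℝ => cosh (z / 2)) (sinh (y / 2) * (1 / 2)) y := by
          have h1 : HasDerivAt (fun z : ℝ => z / 2) (1 / 2) y := by
            simpa using (hasDerivAt_id y).div_const 2
          exact h1.cosh
        have hq : HasDerivAt (fun z : ℝ => cosh z / cosh (z / 2))
            ((sinh y * cosh (y / 2) - cosh y * (sinh (y / 2) * (1 / 2))) / cosh (y / 2) ^ 2) y :=
          (Real.hasDerivAt_cosh y).div hd2 hyc0.ne'
        have hnum : HasDerivAt (fun z : ℝ => 1 - cosh z / cosh (z / 2))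
            (-((sinh y * cosh (y / 2) - cosh y * (sinh (y / 2) * (1 / 2))) /
              cosh (y / 2) ^ 2)) y := hq.const_sub 1
        have hden : HasDerivAt (fun z : ℝ => z ^ 2) (2 * y) y := by
          simpa using hasDerivAt_pow 2 y
        have hf : HasDerivAt (fun z : ℝ => (1 - cosh z / cosh (z / 2)) / z ^ 2)
            ((-((sinh y * cosh (y / 2) - cosh y * (sinh (y / 2) * (1 / 2))) /
                cosh (y / 2) ^ 2) * y ^ 2 -
              (1 - cosh y / cosh (y / 2)) * (2 * y)) / (y ^ 2) ^ 2) y :=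
          hnum.div hden (by positivity)
        rw [hf.deriv]
        apply div_pos _ (by positivity)
        have hkey := keyD (y / 2) hyt0 hyB
        set c := cosh (y / 2)
        set s := sinh (y / 2)
        have hEq : -((sinh y * c - cosh y * (s * (1 / 2))) / c ^ 2) * y ^ 2 -
            (1 - cosh y / c) * (2 * y) =
            y / c ^ 2 * (2 * c * (2 * c + 1) * (c - 1) -
              y / 2 * s * (2 * c ^ 2 + 1)) := by
          rw [hycx, hysx]
          field_simp
          ring
        rw [hEq]
        apply mul_pos (by positivity)
        linarith
    have hmem1 : x ∈ Set.Ioc (0:ℝ) (π / 2) := ⟨hx0, hx1.le⟩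
    have hmem2 : π / 2 ∈ Set.Ioc (0:ℝ) (π / 2) := ⟨by linarith, le_refl _⟩
    have h := mono hmem1 hmem2 hx1
    simp only at h
    have hrw : (1 - cosh (π / 2) / cosh (π / 2 / 2)) / (π / 2) ^ 2
        = 4 / π ^ 2 * (1 - cosh (π / 2) / cosh (π / 4)) := by
      have h24 : π / 2 / 2 = π / 4 := by ring
      rw [h24]
      field_simp
      ring
    rw [hrw] at h
    exact h
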